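/- Let Ω ⊂ ℝⁿ be open and bounded. Let A = (a_{ij}) : ℝⁿ → ℝ^{n×n} have C¹ ℤⁿ-periodic entries bounded together with their first derivatives; let N_m ∈ C²(ℝⁿ) (1 ≤ m ≤ n) be ℤⁿ-periodic classical solutions of ∂_{y_i}(a_{ij} ∂_{y_j} N_m) = −∂_{y_i} a_{im}, with N_m, ∇N_m, ∇²N_m bounded; let a⁰_{kl} = ∫_{[0,1]ⁿ} (a_{kl} + a_{km} ∂_{y_m} N_l) dy; let M_{kl} ∈ C²(ℝⁿ) (1 ≤ k,l ≤ n) be ℤⁿ-periodic classical solutions of −∂_{y_i}(a_{ij} ∂_{y_j} M_{kl}) = a_{kl} + a_{km} ∂_{y_m} N_l − a⁰_{kl} + ∂_{y_i}(a_{ik} N_l), with M_{kl}, ∇M_{kl} bounded; and let u₀ ∈ C⁴(Ω) satisfy −a⁰_{ij} ∂²_{ij} u₀ = f pointwise in Ω, with all partial derivatives of u₀ up to order 4 bounded on Ω. Then there exists a constant C, depending only on the stated bounds on a, N, M, and u₀ (and on n), such that for every 0 < ε ≤ 1 the second-order approximation u_ε^{(2)}(x) = u₀(x) + ε·N_m(x/ε)·∂_m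 u₀(x) + ε²·M_{kl}(x/ε)·∂²_{kl} u₀(x) satisfies sup_{x ∈ Ω} | −∂_{x_i}( a_{ij}(x/ε) ∂_{x_j} u_ε^{(2)}(x) ) − f(x) | ≤ C·ε. -/

import Mathlib

open MeasureTheory

/-- `u : ℝⁿ → ℝ` is ℤⁿ-periodic: `u (y + k) = u y` for all `y ∈ ℝⁿ`, `k ∈ ℤⁿ`. -/
def ZnPeriodic (n : ℕ) (u : EuclideanSpace ℝ (Fin n) → ℝ) : Prop :=
  ∀ (y : EuclideanSpace ℝ (Fin n)) (k : Fin n → ℤ),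
    u (y + (EuclideanSpace.equiv (Fin n) ℝ).symm (fun i => (k i : ℝ))) = u y

/-- The periodic unit cell `Y = [0,1]ⁿ`. -/
def unitCell (n : ℕ) : Set (EuclideanSpace ℝ (Fin n)) :=
  {y | ∀ i, y i ∈ Set.Icc (0 : ℝ) 1}

/-- The partial derivative `∂_{yᵢ} f` of `f : ℝⁿ → ℝ`. -/
noncomputable def pderiv' (n : ℕ) (i : Fin n)
    (f : EuclideanSpace ℝ (Fin n) → ℝ) (y : EuclideanSpace ℝ (Fin n)) : ℝ :=
  fderiv ℝ f y (EuclideanSpace.single i (1 : ℝ))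

namespace SOAR

variable {n : ℕ}

local notation "E" => EuclideanSpace ℝ (Fin n)

lemma pderiv'_congr {f g : E → ℝ} {x : E} (h : f =ᶠ[nhds x] g) (i : Fin n) :
    pderiv' n i f x = pderiv' n i g x := by
  unfold pderiv'; rw [h.fderiv_eq]

lemma pderiv'_add {f g : E → ℝ} {x : E} (hf : DifferentiableAt ℝ f x)
    (hg : DifferentiableAt ℝ g x) (i : Fin n) :
    pderiv' n i (fun z => f z + g z) x = pderiv' n i f x + pderiv' n i g x := by
  unfold pderiv'; rw [fderiv_fun_add hf hg]; simp

lemma pderiv'_mul {f g : E → ℝ} {x : E} (hf : DifferentiableAt ℝ f x)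
    (hg : DifferentiableAt ℝ g x) (i : Fin n) :
    pderiv' n i (fun z => f z * g z) x
      = pderiv' n i f x * g x + f x * pderiv' n i g x := by
  unfold pderiv'; rw [fderiv_fun_mul hf hg]; simp [smul_eq_mul]; ring

lemma pderiv'_const_mul {f : E → ℝ} {x : E} (hf : DifferentiableAt ℝ f x) (c : ℝ) (i : Fin n) :
    pderiv' n i (fun z => c * f z) x = c * pderiv' n i f x := by
  unfold pderiv'; rw [fderiv_const_mul hf]; simp

lemma pderiv'_sum {ι : Type*} (s : Finset ι) {F : ι → E → ℝ} {x : E}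
    (h : ∀ a ∈ s, DifferentiableAt ℝ (F a) x) (i : Fin n) :
    pderiv' n i (fun z => ∑ a ∈ s, F a z) x = ∑ a ∈ s, pderiv' n i (F a) x := by
  unfold pderiv'; rw [fderiv_fun_sum h]; simp

noncomputable def scl (n : ℕ) (c : ℝ) : E →L[ℝ] E := c • ContinuousLinearMap.id ℝ E

lemma scl_apply (c : ℝ) (z : E) : scl n c z = c • z := rfl

lemma differentiableAt_comp_smul {g : E → ℝ} {c : ℝ} {x : E}
    (hg : DifferentiableAt ℝ g (c • x)) :
    DifferentiableAt ℝ (fun z => g (c • z)) x := by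
  have := hg.comp x (scl n c).differentiableAt
  exact this

lemma pderiv'_comp_smul {g : E → ℝ} {c : ℝ} {x : E}
    (hg : DifferentiableAt ℝ g (c • x)) (i : Fin n) :
    pderiv' n i (fun z => g (c • z)) x = c * pderiv' n i g (c • x) := by
  have h1 : (fun z => g (c • z)) = g ∘ (scl n c) := rfl
  unfold pderiv'
  rw [h1, fderiv_comp x (by simpa [scl_apply] using hg) (scl n c).differentiableAt,
    ContinuousLinearMap.fderiv]
  simp [scl, smul_eq_mul]

lemma pderiv'_pderiv' {f : E → ℝ} {y : E} (hf : DifferentiableAt ℝ (fderiv ℝ f) y)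
    (i j : Fin n) :
    pderiv' n i (pderiv' n j f) y
      = fderiv ℝ (fderiv ℝ f) y (EuclideanSpace.single i (1:ℝ)) (EuclideanSpace.single j (1:ℝ)) := by
  unfold pderiv'
  rw [fderiv_clm_apply hf (differentiableAt_const _)]
  simp

lemma norm_single_one (i : Fin n) : ‖(EuclideanSpace.single i (1:ℝ) : E)‖ = 1 := by
  rw [EuclideanSpace.norm_single]; simp

lemma abs_pderiv'_le {g : E → ℝ} {K : ℝ} {y : E} (h : ‖fderiv ℝ g y‖ ≤ K) (i : Fin n) :
    |pderiv' n i g y| ≤ K := by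
  have := (fderiv ℝ g y).le_opNorm (EuclideanSpace.single i (1:ℝ))
  rw [norm_single_one, mul_one] at this
  calc |pderiv' n i g y| = ‖fderiv ℝ g y (EuclideanSpace.single i (1:ℝ))‖ := rfl
    _ ≤ ‖fderiv ℝ g y‖ := this
    _ ≤ K := h

lemma abs_pderiv'_pderiv'_le {f : E → ℝ} {K : ℝ} {y : E} (hf : ContDiff ℝ 2 f)
    (hK : ‖iteratedFDeriv ℝ 2 f y‖ ≤ K) (i j : Fin n) :
    |pderiv' n i (pderiv' n j f) y| ≤ K := by
  have hdiff : DifferentiableAt ℝ (fderiv ℝ f) y :=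
    ((hf.fderiv_right (m := 1) (by norm_num)).differentiable one_ne_zero).differentiableAt
  rw [pderiv'_pderiv' hdiff]
  set v : Fin 2 → E := ![EuclideanSpace.single i (1:ℝ), EuclideanSpace.single j (1:ℝ)] with hv
  have h2 := iteratedFDeriv_two_apply (𝕜 := ℝ) f y v
  have hv0 : v 0 = EuclideanSpace.single i (1:ℝ) := rfl
  have hv1 : v 1 = EuclideanSpace.single j (1:ℝ) := rfl
  rw [hv0, hv1] at h2
  rw [← Real.norm_eq_abs, ← h2]
  have hle := (iteratedFDeriv ℝ 2 f y).le_opNorm v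
  have hprod : (∏ a : Fin 2, ‖v a‖) = 1 := by
    rw [Fin.prod_univ_two, hv0, hv1, norm_single_one, norm_single_one, mul_one]
  rw [hprod, mul_one] at hle
  exact hle.trans hK


lemma contDiff_pderiv' {f : E → ℝ} {m k : WithTop ℕ∞} (hf : ContDiff ℝ k f)
    (h : m + 1 ≤ k) (i : Fin n) : ContDiff ℝ m (pderiv' n i f) :=
  (hf.fderiv_right h).clm_apply contDiff_const

lemma contDiffAt_pderiv' {f : E → ℝ} {x : E} {m k : WithTop ℕ∞} (hf : ContDiffAt ℝ k f x)
    (h : m + 1 ≤ k) (i : Fin n) : ContDiffAt ℝ m (pderiv' n i f) x :=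
  (hf.fderiv_right h).clm_apply contDiffAt_const

lemma abs_sum_le_card (f : Fin n → ℝ) (c : ℝ) (h : ∀ i, |f i| ≤ c) :
    |∑ i, f i| ≤ (n : ℝ) * c := by
  calc |∑ i, f i| ≤ ∑ i, |f i| := Finset.abs_sum_le_sum_abs _ _
    _ ≤ ∑ _i : Fin n, c := Finset.sum_le_sum fun i _ => h i
    _ = (n : ℝ) * c := by simp [Finset.sum_const, mul_comm]

lemma abs_mul_le {a b c d : ℝ} (h1 : |a| ≤ c) (h2 : |b| ≤ d) (hc : 0 ≤ c) :
    |a * b| ≤ c * d := by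
  rw [abs_mul]; exact mul_le_mul h1 h2 (abs_nonneg _) hc

lemma sum_comm3 {R : Type*} [AddCommMonoid R] (f : Fin n → Fin n → Fin n → R) :
    ∑ i, ∑ j, ∑ m, f i j m = ∑ m, ∑ i, ∑ j, f i j m := by
  calc ∑ i, ∑ j, ∑ m, f i j m = ∑ i, ∑ m, ∑ j, f i j m :=
        Finset.sum_congr rfl fun i _ => Finset.sum_comm
    _ = ∑ m, ∑ i, ∑ j, f i j m := Finset.sum_comm

lemma sum_comm4 {R : Type*} [AddCommMonoid R] (f : Fin n → Fin n → Fin n → Fin n → R) :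
    ∑ i, ∑ j, ∑ k, ∑ l, f i j k l = ∑ k, ∑ l, ∑ i, ∑ j, f i j k l := by
  calc ∑ i, ∑ j, ∑ k, ∑ l, f i j k l = ∑ k, ∑ i, ∑ j, ∑ l, f i j k l :=
        sum_comm3 _
    _ = ∑ k, ∑ l, ∑ i, ∑ j, f i j k l :=
        Finset.sum_congr rfl fun k _ => sum_comm3 _

theorem key_algebra (ε εi : ℝ) (hε : ε * εi = 1)
    (A A' a0 : Fin n → Fin n → ℝ)
    (Nv : Fin n → ℝ) (N' : Fin n → Fin n → ℝ) (N'' : Fin n → Fin n → Fin n → ℝ)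
    (Mv : Fin n → Fin n → ℝ) (M' : Fin n → Fin n → Fin n → ℝ)
    (M'' : Fin n → Fin n → Fin n → Fin n → ℝ)
    (U1 : Fin n → ℝ) (U2 : Fin n → Fin n → ℝ) (U3 : Fin n → Fin n → Fin n → ℝ)
    (U4 : Fin n → Fin n → Fin n → Fin n → ℝ)
    (H : Fin n → ℝ) (DH : Fin n → Fin n → ℝ)
    (hH : ∀ j, H j = U1 j
      + ε * (∑ m, (εi * N' m j * U1 m + Nv m * U2 j m))
      + ε ^ 2 * (∑ k, ∑ l, (εi * M' k l j * U2 k l + Mv k l * U3 j k l)))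
    (hDH : ∀ i j, DH i j = U2 i j
      + ε * (∑ m, (εi * (εi * N'' m j i * U1 m + N' m j * U2 i m)
          + (εi * N' m i * U2 j m + Nv m * U3 i j m)))
      + ε ^ 2 * (∑ k, ∑ l, (εi * (εi * M'' k l j i * U2 k l + M' k l j * U3 i k l)
          + (εi * M' k l i * U3 j k l + Mv k l * U4 i j k l))))
    (C1 : ∀ m : Fin n, ∑ i, ∑ j, (A' i j * N' m j + A i j * N'' m j i) = -∑ i, A' i m)
    (C2 : ∀ k l : Fin n, -(∑ i, ∑ j, (A' i j * M' k l j + A i j * M'' k l j i))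
      = A k l + (∑ m, A k m * N' l m) - a0 k l + ∑ i, (A' i k * Nv l + A i k * N' l i)) :
    (-(∑ i, ∑ j, (εi * A' i j * H j + A i j * DH i j)))
        - (-(∑ k, ∑ l, a0 k l * U2 k l))
      = -(ε * (∑ i, ∑ j, (A' i j * (∑ k, ∑ l, Mv k l * U3 j k l)
            + A i j * ((∑ m, Nv m * U3 i j m)
              + (∑ k, ∑ l, M' k l j * U3 i k l) + (∑ k, ∑ l, M' k l i * U3 j k l))))
        + ε ^ 2 * (∑ i, ∑ j, A i j * (∑ k, ∑ l, Mv k l * U4 i j k l))) := by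
  -- abbreviations for the inner sums
  set SB : Fin n → ℝ := fun j => ∑ m, N' m j * U1 m with hSB
  set SC : Fin n → ℝ := fun j => ∑ m, Nv m * U2 j m with hSC
  set SD : Fin n → ℝ := fun j => ∑ k, ∑ l, M' k l j * U2 k l with hSD
  set SE : Fin n → ℝ := fun j => ∑ k, ∑ l, Mv k l * U3 j k l with hSE
  set PB : Fin n → Fin n → ℝ := fun i j => ∑ m, N'' m j i * U1 m with hPB
  set PC : Fin n → Fin n → ℝ := fun i j => ∑ m, N' m j * U2 i m with hPC
  set PD : Fin n → Fin n → ℝ := fun i j => ∑ m, N' m i * U2 j m with hPD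
  set PE : Fin n → Fin n → ℝ := fun i j => ∑ k, ∑ l, M'' k l j i * U2 k l with hPE
  set QA : Fin n → Fin n → ℝ := fun i j => ∑ m, Nv m * U3 i j m with hQA
  set QB : Fin n → Fin n → ℝ := fun i j => ∑ k, ∑ l, M' k l j * U3 i k l with hQB
  set QC : Fin n → Fin n → ℝ := fun i j => ∑ k, ∑ l, M' k l i * U3 j k l with hQC
  set QD : Fin n → Fin n → ℝ := fun i j => ∑ k, ∑ l, Mv k l * U4 i j k l with hQD
  -- clean forms of H and DH
  have hH' : ∀ j, H j = U1 j + SB j + ε * SC j + ε * SD j + ε ^ 2 * SE j := by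
    intro j
    have e1 : (∑ m, (εi * N' m j * U1 m + Nv m * U2 j m)) = εi * SB j + SC j := by
      simp only [hSB, hSC, Finset.mul_sum, ← Finset.sum_add_distrib]
      exact Finset.sum_congr rfl fun m _ => by ring
    have e2 : (∑ k, ∑ l, (εi * M' k l j * U2 k l + Mv k l * U3 j k l))
        = εi * SD j + SE j := by
      simp only [hSD, hSE, Finset.mul_sum, ← Finset.sum_add_distrib]
      exact Finset.sum_congr rfl fun k _ => Finset.sum_congr rfl fun l _ => by ring
    rw [hH j, e1, e2]
    linear_combination (SB j + ε * SD j) * hε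
  have hDH' : ∀ i j, DH i j = U2 i j + εi * PB i j + PC i j + PD i j + PE i j
      + ε * (QA i j + QB i j + QC i j) + ε ^ 2 * QD i j := by
    intro i j
    have e1 : (∑ m, (εi * (εi * N'' m j i * U1 m + N' m j * U2 i m)
        + (εi * N' m i * U2 j m + Nv m * U3 i j m)))
        = εi * (εi * PB i j + PC i j) + (εi * PD i j + QA i j) := by
      simp only [hPB, hPC, hPD, hQA, Finset.mul_sum, ← Finset.sum_add_distrib]
      exact Finset.sum_congr rfl fun m _ => by ring
    have e2 : (∑ k, ∑ l, (εi * (εi * M'' k l j i * U2 k l + M' k l j * U3 i k l)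
        + (εi * M' k l i * U3 j k l + Mv k l * U4 i j k l)))
        = εi * (εi * PE i j + QB i j) + (εi * QC i j + QD i j) := by
      simp only [hPE, hQB, hQC, hQD, Finset.mul_sum, ← Finset.sum_add_distrib]
      exact Finset.sum_congr rfl fun k _ => Finset.sum_congr rfl fun l _ => by ring
    rw [hDH i j, e1, e2]
    linear_combination (εi * PB i j + PC i j + PD i j + (ε * εi + 1) * PE i j
      + ε * QB i j + ε * QC i j) * hε
  -- split each (i,j) term by powers of ε
  set XS : ℝ := ∑ i, ∑ j, (A' i j * (U1 j + SB j) + A i j * PB i j) with hXS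
  set YS : ℝ := ∑ i, ∑ j, (A' i j * (SC j + SD j)
      + A i j * (U2 i j + PC i j + PD i j + PE i j)) with hYS
  set ZS : ℝ := ∑ i, ∑ j, (A' i j * SE j + A i j * (QA i j + QB i j + QC i j)) with hZS
  set WS : ℝ := ∑ i, ∑ j, (A i j * QD i j) with hWS
  have hsplit_sum : (∑ i, ∑ j, (εi * A' i j * H j + A i j * DH i j))
      = εi * XS + YS + ε * ZS + ε ^ 2 * WS := by
    have step : ∀ i j : Fin n, εi * A' i j * H j + A i j * DH i j
        = εi * (A' i j * (U1 j + SB j) + A i j * PB i j)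
          + (A' i j * (SC j + SD j) + A i j * (U2 i j + PC i j + PD i j + PE i j))
          + ε * (A' i j * SE j + A i j * (QA i j + QB i j + QC i j))
          + ε ^ 2 * (A i j * QD i j) := by
      intro i j
      rw [hH' j, hDH' i j]
      linear_combination (A' i j * (SC j + SD j + ε * SE j)) * hε
    rw [hXS, hYS, hZS, hWS]
    simp only [Finset.mul_sum, ← Finset.sum_add_distrib]
    exact Finset.sum_congr rfl fun i _ => Finset.sum_congr rfl fun j _ => step i j
  -- the ε⁻¹-order terms vanish by the first cell problem
  have hXa : (∑ i, ∑ j, A' i j * U1 j) = ∑ m, (∑ i, A' i m) * U1 m := by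
    rw [Finset.sum_comm]
    exact Finset.sum_congr rfl fun j _ => (Finset.sum_mul _ _ _).symm
  have hXb : (∑ i, ∑ j, A' i j * SB j)
      = ∑ m, (∑ i, ∑ j, A' i j * N' m j) * U1 m := by
    simp only [hSB, Finset.mul_sum]
    rw [sum_comm3]
    refine Finset.sum_congr rfl fun m _ => ?_
    rw [Finset.sum_mul]
    refine Finset.sum_congr rfl fun i _ => ?_
    rw [Finset.sum_mul]
    exact Finset.sum_congr rfl fun j _ => by ring
  have hXc : (∑ i, ∑ j, A i j * PB i j)
      = ∑ m, (∑ i, ∑ j, A i j * N'' m j i) * U1 m := by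
    simp only [hPB, Finset.mul_sum]
    rw [sum_comm3]
    refine Finset.sum_congr rfl fun m _ => ?_
    rw [Finset.sum_mul]
    refine Finset.sum_congr rfl fun i _ => ?_
    rw [Finset.sum_mul]
    exact Finset.sum_congr rfl fun j _ => by ring
  have hX : XS = 0 := by
    have hsp : XS = (∑ i, ∑ j, A' i j * U1 j)
        + ((∑ i, ∑ j, A' i j * SB j) + (∑ i, ∑ j, A i j * PB i j)) := by
      rw [hXS]
      simp only [← Finset.sum_add_distrib]
      exact Finset.sum_congr rfl fun i _ => Finset.sum_congr rfl fun j _ => by ring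
    rw [hsp, hXa, hXb, hXc, ← Finset.sum_add_distrib, ← Finset.sum_add_distrib]
    refine Finset.sum_eq_zero fun m _ => ?_
    have hc := C1 m
    have hsplit2 : (∑ i, ∑ j, (A' i j * N' m j + A i j * N'' m j i))
        = (∑ i, ∑ j, A' i j * N' m j) + ∑ i, ∑ j, A i j * N'' m j i := by
      simp only [Finset.sum_add_distrib]
    rw [hsplit2] at hc
    linear_combination U1 m * hc
  -- the ε⁰-order terms reduce to the homogenized operator by the second cell problem
  have hyb : (∑ i, ∑ j, A' i j * SC j)
      = ∑ k, ∑ l, (∑ i, A' i k * Nv l) * U2 k l := by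
    simp only [hSC, Finset.mul_sum]
    rw [Finset.sum_comm]
    refine Finset.sum_congr rfl fun k _ => ?_
    rw [Finset.sum_comm]
    refine Finset.sum_congr rfl fun l _ => ?_
    rw [Finset.sum_mul]
    exact Finset.sum_congr rfl fun i _ => by ring
  have hyc : (∑ i, ∑ j, A' i j * SD j)
      = ∑ k, ∑ l, (∑ i, ∑ j, A' i j * M' k l j) * U2 k l := by
    simp only [hSD, Finset.mul_sum]
    rw [sum_comm4]
    refine Finset.sum_congr rfl fun k _ => Finset.sum_congr rfl fun l _ => ?_
    rw [Finset.sum_mul]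
    refine Finset.sum_congr rfl fun i _ => ?_
    rw [Finset.sum_mul]
    exact Finset.sum_congr rfl fun j _ => by ring
  have hyd : (∑ i, ∑ j, A i j * PC i j)
      = ∑ k, ∑ l, (∑ m, A k m * N' l m) * U2 k l := by
    simp only [hPC, Finset.mul_sum]
    refine Finset.sum_congr rfl fun i _ => ?_
    rw [Finset.sum_comm]
    refine Finset.sum_congr rfl fun m _ => ?_
    rw [Finset.sum_mul]
    exact Finset.sum_congr rfl fun j _ => by ring
  have hye : (∑ i, ∑ j, A i j * PD i j)
      = ∑ k, ∑ l, (∑ i, A i k * N' l i) * U2 k l := by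
    simp only [hPD, Finset.mul_sum]
    rw [Finset.sum_comm]
    refine Finset.sum_congr rfl fun k _ => ?_
    rw [Finset.sum_comm]
    refine Finset.sum_congr rfl fun l _ => ?_
    rw [Finset.sum_mul]
    exact Finset.sum_congr rfl fun i _ => by ring
  have hyf : (∑ i, ∑ j, A i j * PE i j)
      = ∑ k, ∑ l, (∑ i, ∑ j, A i j * M'' k l j i) * U2 k l := by
    simp only [hPE, Finset.mul_sum]
    rw [sum_comm4]
    refine Finset.sum_congr rfl fun k _ => Finset.sum_congr rfl fun l _ => ?_
    rw [Finset.sum_mul]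
    refine Finset.sum_congr rfl fun i _ => ?_
    rw [Finset.sum_mul]
    exact Finset.sum_congr rfl fun j _ => by ring
  have hY : YS = ∑ k, ∑ l, a0 k l * U2 k l := by
    have hsp : YS = (∑ i, ∑ j, A' i j * SC j) + ((∑ i, ∑ j, A' i j * SD j)
        + ((∑ i, ∑ j, A i j * U2 i j) + ((∑ i, ∑ j, A i j * PC i j)
        + ((∑ i, ∑ j, A i j * PD i j) + (∑ i, ∑ j, A i j * PE i j))))) := by
      rw [hYS]
      simp only [← Finset.sum_add_distrib]
      exact Finset.sum_congr rfl fun i _ => Finset.sum_congr rfl fun j _ => by ring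
    rw [hsp, hyb, hyc, hyd, hye, hyf]
    simp only [← Finset.sum_add_distrib]
    refine Finset.sum_congr rfl fun k _ => Finset.sum_congr rfl fun l _ => ?_
    have hc := C2 k l
    have hs1 : (∑ i, ∑ j, (A' i j * M' k l j + A i j * M'' k l j i))
        = (∑ i, ∑ j, A' i j * M' k l j) + ∑ i, ∑ j, A i j * M'' k l j i := by
      simp only [Finset.sum_add_distrib]
    have hs2 : (∑ i, (A' i k * Nv l + A i k * N' l i))
        = (∑ i, A' i k * Nv l) + ∑ i, A i k * N' l i := by
      simp only [Finset.sum_add_distrib]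
    rw [hs1, hs2] at hc
    have hAU : (∑ (i : Fin n), ∑ (j : Fin n), A i j * U2 i j)
        = ∑ (k : Fin n), ∑ (l : Fin n), A k l * U2 k l := rfl
    linear_combination (-U2 k l) * hc
  -- conclusion
  have hfinal : (-(∑ i, ∑ j, (εi * A' i j * H j + A i j * DH i j)))
      - (-(∑ k, ∑ l, a0 k l * U2 k l)) = -(ε * ZS + ε ^ 2 * WS) := by
    rw [hsplit_sum, hX, hY]
    ring
  rw [hfinal, hZS, hWS]


end SOAR



/-- With `A = (a_{ij})` `C¹`, ℤⁿ-periodic, bounded with bounded first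
derivatives; `N_m ∈ C²` ℤⁿ-periodic bounded solutions (with bounded first and second
derivatives) of the first cell problem `∂_{yᵢ}(a_{ij}∂_{yⱼ}N_m) = −∂_{yᵢ}a_{im}`;
`a⁰_{kl} = ∫_Y (a_{kl} + a_{km}∂_{y_m}N_l) dy`; `M_{kl} ∈ C²` ℤⁿ-periodic bounded solutions
(with bounded first derivatives) of the second cell problem
`−∂_{yᵢ}(a_{ij}∂_{yⱼ}M_{kl}) = a_{kl} + a_{km}∂_{y_m}N_l − a⁰_{kl} + ∂_{yᵢ}(a_{ik}N_l)`;
and `u₀ ∈ C⁴(Ω)` a solution of the homogenized equation `−a⁰_{ij}∂²_{ij}u₀ = f` on the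
open bounded set `Ω` with all partial derivatives up to order 4 bounded, there is a
constant `C` such that for all `0 < ε ≤ 1` the second-order approximation
`u_ε^{(2)} = u₀ + ε N_m(x/ε) ∂_m u₀ + ε² M_{kl}(x/ε) ∂²_{kl}u₀` satisfies
`sup_Ω |−∂_{xᵢ}(a_{ij}(x/ε) ∂_{xⱼ} u_ε^{(2)}) − f| ≤ C ε`. -/

theorem second_order_ansatz_residual_O_eps
    (n : ℕ) (Ω : Set (EuclideanSpace ℝ (Fin n)))
    (hΩ : IsOpen Ω) (hΩb : Bornology.IsBounded Ω)
    (a : Fin n → Fin n → EuclideanSpace ℝ (Fin n) → ℝ)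
    (N : Fin n → EuclideanSpace ℝ (Fin n) → ℝ)
    (M : Fin n → Fin n → EuclideanSpace ℝ (Fin n) → ℝ)
    (u₀ f : EuclideanSpace ℝ (Fin n) → ℝ)
    (a0 : Fin n → Fin n → ℝ)
    (Ka Kn Km Ku : ℝ)
    -- the coefficients
    (ha : ∀ i j, ContDiff ℝ 1 (a i j))
    (haper : ∀ i j, ZnPeriodic n (a i j))
    (habd : ∀ i j y, |a i j y| ≤ Ka)
    (habd' : ∀ i j y, ‖fderiv ℝ (a i j) y‖ ≤ Ka)
    -- the first-order correctors
    (hN : ∀ m, ContDiff ℝ 2 (N m))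
    (hNper : ∀ m, ZnPeriodic n (N m))
    (hNbd : ∀ m y, |N m y| ≤ Kn)
    (hNbd' : ∀ m y, ‖fderiv ℝ (N m) y‖ ≤ Kn)
    (hNbd'' : ∀ m y, ‖iteratedFDeriv ℝ 2 (N m) y‖ ≤ Kn)
    (hNcell : ∀ (m : Fin n) (y : EuclideanSpace ℝ (Fin n)),
      (∑ i, pderiv' n i (fun z => ∑ j, a i j z * pderiv' n j (N m) z) y)
        = -∑ i, pderiv' n i (a i m) y)
    -- the homogenized coefficients
    (ha0 : ∀ k l, a0 k l
      = ∫ y in unitCell n, (a k l y + ∑ m, a k m y * pderiv' n m (N l) y))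
    -- the second-order correctors
    (hM : ∀ k l, ContDiff ℝ 2 (M k l))
    (hMper : ∀ k l, ZnPeriodic n (M k l))
    (hMbd : ∀ k l y, |M k l y| ≤ Km)
    (hMbd' : ∀ k l y, ‖fderiv ℝ (M k l) y‖ ≤ Km)
    (hMcell : ∀ (k l : Fin n) (y : EuclideanSpace ℝ (Fin n)),
      -(∑ i, pderiv' n i (fun z => ∑ j, a i j z * pderiv' n j (M k l) z) y)
        = a k l y + (∑ m, a k m y * pderiv' n m (N l) y) - a0 k l
          + ∑ i, pderiv' n i (fun z => a i k z * N l z) y)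
    -- the homogenized solution
    (hu₀ : ContDiffOn ℝ 4 u₀ Ω)
    (hu₀bd : ∀ x ∈ Ω, |u₀ x| ≤ Ku)
    (hu₀bd1 : ∀ x ∈ Ω, ∀ i, |pderiv' n i u₀ x| ≤ Ku)
    (hu₀bd2 : ∀ x ∈ Ω, ∀ i j, |pderiv' n i (pderiv' n j u₀) x| ≤ Ku)
    (hu₀bd3 : ∀ x ∈ Ω, ∀ i j k, |pderiv' n i (pderiv' n j (pderiv' n k u₀)) x| ≤ Ku)
    (hu₀bd4 : ∀ x ∈ Ω, ∀ i j k l,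
      |pderiv' n i (pderiv' n j (pderiv' n k (pderiv' n l u₀))) x| ≤ Ku)
    (hu₀f : ∀ x ∈ Ω, -(∑ i, ∑ j, a0 i j * pderiv' n i (pderiv' n j u₀) x) = f x) :
    ∃ C : ℝ, ∀ ε : ℝ, 0 < ε → ε ≤ 1 → ∀ x ∈ Ω,
      |(-(∑ i, pderiv' n i
            (fun x' => ∑ j, a i j (ε⁻¹ • x') *
              pderiv' n j
                (fun x'' => u₀ x''
                  + ε * ∑ m, N m (ε⁻¹ • x'') * pderiv' n m u₀ x''
                  + ε ^ 2 * ∑ k, ∑ l,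
                      M k l (ε⁻¹ • x'') * pderiv' n k (pderiv' n l u₀) x'') x') x))
          - f x| ≤ C * ε := by
  classical
  set Ka' : ℝ := max Ka 0 with hKa'
  set Kn' : ℝ := max Kn 0 with hKn'
  set Km' : ℝ := max Km 0 with hKm'
  set Ku' : ℝ := max Ku 0 with hKu'
  have hKa0 : 0 ≤ Ka' := le_max_right _ _
  have hKn0 : 0 ≤ Kn' := le_max_right _ _
  have hKm0 : 0 ≤ Km' := le_max_right _ _
  have hKu0 : 0 ≤ Ku' := le_max_right _ _
  have hn0 : (0:ℝ) ≤ (n:ℝ) := Nat.cast_nonneg n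
  set cz : ℝ := Ka' * ((n:ℝ) * ((n:ℝ) * (Km' * Ku')))
      + Ka' * ((n:ℝ) * (Kn' * Ku') + (n:ℝ) * ((n:ℝ) * (Km' * Ku'))
        + (n:ℝ) * ((n:ℝ) * (Km' * Ku'))) with hcz
  set cw : ℝ := Ka' * ((n:ℝ) * ((n:ℝ) * (Km' * Ku'))) with hcw
  have hmm0 : 0 ≤ (n:ℝ) * ((n:ℝ) * (Km' * Ku')) :=
    mul_nonneg hn0 (mul_nonneg hn0 (mul_nonneg hKm0 hKu0))
  have hcw0 : 0 ≤ cw := mul_nonneg hKa0 hmm0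
  have hcw2 : 0 ≤ (n:ℝ) * ((n:ℝ) * cw) := mul_nonneg hn0 (mul_nonneg hn0 hcw0)
  refine ⟨(n:ℝ) * ((n:ℝ) * cz) + (n:ℝ) * ((n:ℝ) * cw), ?_⟩
  intro ε hε hε1 x hx
  have hεne : ε ≠ 0 := ne_of_gt hε
  have hmulinv : ε * ε⁻¹ = 1 := mul_inv_cancel₀ hεne
  -- global differentiability facts
  have hNd : ∀ m, Differentiable ℝ (N m) := fun m => (hN m).differentiable (by norm_num)
  have hMd : ∀ k l, Differentiable ℝ (M k l) := fun k l => (hM k l).differentiable (by norm_num)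
  have had : ∀ i j, Differentiable ℝ (a i j) := fun i j => (ha i j).differentiable one_ne_zero
  have hN1d : ∀ m j, Differentiable ℝ (pderiv' n j (N m)) := fun m j =>
    (SOAR.contDiff_pderiv' (hN m) (by norm_num) j).differentiable one_ne_zero
  have hM1d : ∀ k l j, Differentiable ℝ (pderiv' n j (M k l)) := fun k l j =>
    (SOAR.contDiff_pderiv' (hM k l) (by norm_num) j).differentiable one_ne_zero
  -- smoothness of u₀ at points of Ω
  have c4 : ∀ x' ∈ Ω, ContDiffAt ℝ 4 u₀ x' := fun x' h => hu₀.contDiffAt (hΩ.mem_nhds h)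
  have c3 : ∀ x' ∈ Ω, ∀ m, ContDiffAt ℝ 3 (pderiv' n m u₀) x' := fun x' h m =>
    SOAR.contDiffAt_pderiv' (c4 x' h) (by norm_num) m
  have c2 : ∀ x' ∈ Ω, ∀ k l, ContDiffAt ℝ 2 (pderiv' n k (pderiv' n l u₀)) x' := fun x' h k l =>
    SOAR.contDiffAt_pderiv' (c3 x' h l) (by norm_num) k
  have c1 : ∀ x' ∈ Ω, ∀ j k l,
      ContDiffAt ℝ 1 (pderiv' n j (pderiv' n k (pderiv' n l u₀))) x' := fun x' h j k l =>
    SOAR.contDiffAt_pderiv' (c2 x' h k l) (by norm_num) j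
  have d0 : ∀ x' ∈ Ω, DifferentiableAt ℝ u₀ x' := fun x' h =>
    (c4 x' h).differentiableAt (by norm_num)
  have d1 : ∀ x' ∈ Ω, ∀ m, DifferentiableAt ℝ (pderiv' n m u₀) x' := fun x' h m =>
    (c3 x' h m).differentiableAt (by norm_num)
  have d2 : ∀ x' ∈ Ω, ∀ k l, DifferentiableAt ℝ (pderiv' n k (pderiv' n l u₀)) x' :=
    fun x' h k l => (c2 x' h k l).differentiableAt (by norm_num)
  have d3 : ∀ x' ∈ Ω, ∀ j k l,
      DifferentiableAt ℝ (pderiv' n j (pderiv' n k (pderiv' n l u₀))) x' :=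
    fun x' h j k l => (c1 x' h j k l).differentiableAt one_ne_zero
  -- the first-order derivative of the ansatz
  set Hf : Fin n → EuclideanSpace ℝ (Fin n) → ℝ := fun j x' =>
    pderiv' n j u₀ x'
    + ε * ∑ m, (ε⁻¹ * pderiv' n j (N m) (ε⁻¹ • x') * pderiv' n m u₀ x'
        + N m (ε⁻¹ • x') * pderiv' n j (pderiv' n m u₀) x')
    + ε ^ 2 * ∑ k, ∑ l, (ε⁻¹ * pderiv' n j (M k l) (ε⁻¹ • x') * pderiv' n k (pderiv' n l u₀) x'
        + M k l (ε⁻¹ • x') * pderiv' n j (pderiv' n k (pderiv' n l u₀)) x') with hHf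
  have hinner : ∀ x' ∈ Ω, ∀ j, pderiv' n j (fun x'' => u₀ x''
                  + ε * ∑ m, N m (ε⁻¹ • x'') * pderiv' n m u₀ x''
                  + ε ^ 2 * ∑ k, ∑ l,
                      M k l (ε⁻¹ • x'') * pderiv' n k (pderiv' n l u₀) x'') x' = Hf j x' := by
    intro x' hx' j
    have dN : ∀ m, DifferentiableAt ℝ (fun z => N m (ε⁻¹ • z)) x' := fun m =>
      SOAR.differentiableAt_comp_smul ((hNd m) _)
    have dM : ∀ k l, DifferentiableAt ℝ (fun z => M k l (ε⁻¹ • z)) x' := fun k l =>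
      SOAR.differentiableAt_comp_smul ((hMd k l) _)
    have dP1 : ∀ m, DifferentiableAt ℝ (fun z => N m (ε⁻¹ • z) * pderiv' n m u₀ z) x' :=
      fun m => (dN m).mul (d1 x' hx' m)
    have dS1 : DifferentiableAt ℝ (fun z => ∑ m, N m (ε⁻¹ • z) * pderiv' n m u₀ z) x' :=
      DifferentiableAt.fun_sum fun m _ => dP1 m
    have dP2 : ∀ k l, DifferentiableAt ℝ
        (fun z => M k l (ε⁻¹ • z) * pderiv' n k (pderiv' n l u₀) z) x' :=
      fun k l => (dM k l).mul (d2 x' hx' k l)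
    have dS2i : ∀ k, DifferentiableAt ℝ
        (fun z => ∑ l, M k l (ε⁻¹ • z) * pderiv' n k (pderiv' n l u₀) z) x' :=
      fun k => DifferentiableAt.fun_sum fun l _ => dP2 k l
    have dS2 : DifferentiableAt ℝ
        (fun z => ∑ k, ∑ l, M k l (ε⁻¹ • z) * pderiv' n k (pderiv' n l u₀) z) x' :=
      DifferentiableAt.fun_sum fun k _ => dS2i k
    have e1 : (∑ m, pderiv' n j (fun z => N m (ε⁻¹ • z) * pderiv' n m u₀ z) x')
        = ∑ m, (ε⁻¹ * pderiv' n j (N m) (ε⁻¹ • x') * pderiv' n m u₀ x'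
            + N m (ε⁻¹ • x') * pderiv' n j (pderiv' n m u₀) x') :=
      Finset.sum_congr rfl fun m _ => by
        rw [SOAR.pderiv'_mul (dN m) (d1 x' hx' m) j, SOAR.pderiv'_comp_smul ((hNd m) _) j]
    have e2 : (∑ k, pderiv' n j
          (fun z => ∑ l, M k l (ε⁻¹ • z) * pderiv' n k (pderiv' n l u₀) z) x')
        = ∑ k, ∑ l, (ε⁻¹ * pderiv' n j (M k l) (ε⁻¹ • x') * pderiv' n k (pderiv' n l u₀) x'
            + M k l (ε⁻¹ • x') * pderiv' n j (pderiv' n k (pderiv' n l u₀)) x') :=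
      Finset.sum_congr rfl fun k _ => by
        rw [SOAR.pderiv'_sum _ (fun l _ => dP2 k l) j]
        exact Finset.sum_congr rfl fun l _ => by
          rw [SOAR.pderiv'_mul (dM k l) (d2 x' hx' k l) j,
            SOAR.pderiv'_comp_smul ((hMd k l) _) j]
    rw [SOAR.pderiv'_add ((d0 x' hx').fun_add (dS1.const_mul ε)) (dS2.const_mul (ε ^ 2)) j,
      SOAR.pderiv'_add (d0 x' hx') (dS1.const_mul ε) j,
      SOAR.pderiv'_const_mul dS1 ε j, SOAR.pderiv'_const_mul dS2 (ε ^ 2) j,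
      SOAR.pderiv'_sum _ (fun m _ => dP1 m) j, SOAR.pderiv'_sum _ (fun k _ => dS2i k) j,
      e1, e2, hHf]
  -- differentiability of Hf at x
  have dNs : ∀ m, DifferentiableAt ℝ (fun z => N m (ε⁻¹ • z)) x := fun m =>
    SOAR.differentiableAt_comp_smul ((hNd m) _)
  have dMs : ∀ k l, DifferentiableAt ℝ (fun z => M k l (ε⁻¹ • z)) x := fun k l =>
    SOAR.differentiableAt_comp_smul ((hMd k l) _)
  have dPN : ∀ m j, DifferentiableAt ℝ (fun z => pderiv' n j (N m) (ε⁻¹ • z)) x := fun m j =>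
    SOAR.differentiableAt_comp_smul ((hN1d m j) _)
  have dPM : ∀ k l j, DifferentiableAt ℝ (fun z => pderiv' n j (M k l) (ε⁻¹ • z)) x :=
    fun k l j => SOAR.differentiableAt_comp_smul ((hM1d k l j) _)
  have q1 : ∀ j m, DifferentiableAt ℝ
      (fun z => ε⁻¹ * pderiv' n j (N m) (ε⁻¹ • z) * pderiv' n m u₀ z
        + N m (ε⁻¹ • z) * pderiv' n j (pderiv' n m u₀) z) x := fun j m =>
    (((dPN m j).const_mul ε⁻¹).mul (d1 x hx m)).add ((dNs m).mul (d2 x hx j m))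
  have qS1 : ∀ j, DifferentiableAt ℝ
      (fun z => ∑ m, (ε⁻¹ * pderiv' n j (N m) (ε⁻¹ • z) * pderiv' n m u₀ z
        + N m (ε⁻¹ • z) * pderiv' n j (pderiv' n m u₀) z)) x := fun j =>
    DifferentiableAt.fun_sum fun m _ => q1 j m
  have q2 : ∀ j k l, DifferentiableAt ℝ
      (fun z => ε⁻¹ * pderiv' n j (M k l) (ε⁻¹ • z) * pderiv' n k (pderiv' n l u₀) z
        + M k l (ε⁻¹ • z) * pderiv' n j (pderiv' n k (pderiv' n l u₀)) z) x := fun j k l =>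
    (((dPM k l j).const_mul ε⁻¹).mul (d2 x hx k l)).add ((dMs k l).mul (d3 x hx j k l))
  have qS2i : ∀ j k, DifferentiableAt ℝ
      (fun z => ∑ l, (ε⁻¹ * pderiv' n j (M k l) (ε⁻¹ • z) * pderiv' n k (pderiv' n l u₀) z
        + M k l (ε⁻¹ • z) * pderiv' n j (pderiv' n k (pderiv' n l u₀)) z)) x := fun j k =>
    DifferentiableAt.fun_sum fun l _ => q2 j k l
  have qS2 : ∀ j, DifferentiableAt ℝ
      (fun z => ∑ k, ∑ l, (ε⁻¹ * pderiv' n j (M k l) (ε⁻¹ • z) * pderiv' n k (pderiv' n l u₀) z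
        + M k l (ε⁻¹ • z) * pderiv' n j (pderiv' n k (pderiv' n l u₀)) z)) x := fun j =>
    DifferentiableAt.fun_sum fun k _ => qS2i j k
  have dHfx : ∀ j, DifferentiableAt ℝ (Hf j) x := fun j => by
    simp only [hHf]
    exact ((d1 x hx j).add ((qS1 j).const_mul ε)).add ((qS2 j).const_mul (ε ^ 2))
  -- the second derivative of the ansatz
  have hdH : ∀ i j, pderiv' n i (Hf j) x =
      pderiv' n i (pderiv' n j u₀) x
      + ε * ∑ m, (ε⁻¹ * (ε⁻¹ * pderiv' n i (pderiv' n j (N m)) (ε⁻¹ • x) * pderiv' n m u₀ x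
            + pderiv' n j (N m) (ε⁻¹ • x) * pderiv' n i (pderiv' n m u₀) x)
          + (ε⁻¹ * pderiv' n i (N m) (ε⁻¹ • x) * pderiv' n j (pderiv' n m u₀) x
            + N m (ε⁻¹ • x) * pderiv' n i (pderiv' n j (pderiv' n m u₀)) x))
      + ε ^ 2 * ∑ k, ∑ l,
          (ε⁻¹ * (ε⁻¹ * pderiv' n i (pderiv' n j (M k l)) (ε⁻¹ • x) * pderiv' n k (pderiv' n l u₀) x
            + pderiv' n j (M k l) (ε⁻¹ • x) * pderiv' n i (pderiv' n k (pderiv' n l u₀)) x)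
          + (ε⁻¹ * pderiv' n i (M k l) (ε⁻¹ • x) * pderiv' n j (pderiv' n k (pderiv' n l u₀)) x
            + M k l (ε⁻¹ • x) * pderiv' n i (pderiv' n j (pderiv' n k (pderiv' n l u₀))) x)) := by
    intro i j
    have e1 : (∑ m, pderiv' n i
          (fun z => ε⁻¹ * pderiv' n j (N m) (ε⁻¹ • z) * pderiv' n m u₀ z
            + N m (ε⁻¹ • z) * pderiv' n j (pderiv' n m u₀) z) x)
        = ∑ m, (ε⁻¹ * (ε⁻¹ * pderiv' n i (pderiv' n j (N m)) (ε⁻¹ • x) * pderiv' n m u₀ x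
            + pderiv' n j (N m) (ε⁻¹ • x) * pderiv' n i (pderiv' n m u₀) x)
          + (ε⁻¹ * pderiv' n i (N m) (ε⁻¹ • x) * pderiv' n j (pderiv' n m u₀) x
            + N m (ε⁻¹ • x) * pderiv' n i (pderiv' n j (pderiv' n m u₀)) x)) :=
      Finset.sum_congr rfl fun m _ => by
        rw [SOAR.pderiv'_add (((dPN m j).const_mul ε⁻¹).fun_mul (d1 x hx m))
            ((dNs m).fun_mul (d2 x hx j m)) i,
          SOAR.pderiv'_mul ((dPN m j).const_mul ε⁻¹) (d1 x hx m) i,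
          SOAR.pderiv'_mul (dNs m) (d2 x hx j m) i,
          SOAR.pderiv'_const_mul (dPN m j) ε⁻¹ i,
          SOAR.pderiv'_comp_smul ((hN1d m j) _) i,
          SOAR.pderiv'_comp_smul ((hNd m) _) i]
        ring
    have e2 : (∑ k, pderiv' n i
          (fun z => ∑ l, (ε⁻¹ * pderiv' n j (M k l) (ε⁻¹ • z) * pderiv' n k (pderiv' n l u₀) z
            + M k l (ε⁻¹ • z) * pderiv' n j (pderiv' n k (pderiv' n l u₀)) z)) x)
        = ∑ k, ∑ l,
          (ε⁻¹ * (ε⁻¹ * pderiv' n i (pderiv' n j (M k l)) (ε⁻¹ • x) * pderiv' n k (pderiv' n l u₀) x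
            + pderiv' n j (M k l) (ε⁻¹ • x) * pderiv' n i (pderiv' n k (pderiv' n l u₀)) x)
          + (ε⁻¹ * pderiv' n i (M k l) (ε⁻¹ • x) * pderiv' n j (pderiv' n k (pderiv' n l u₀)) x
            + M k l (ε⁻¹ • x) * pderiv' n i (pderiv' n j (pderiv' n k (pderiv' n l u₀))) x)) :=
      Finset.sum_congr rfl fun k _ => by
        rw [SOAR.pderiv'_sum _ (fun l _ => q2 j k l) i]
        refine Finset.sum_congr rfl fun l _ => ?_
        rw [SOAR.pderiv'_add (((dPM k l j).const_mul ε⁻¹).fun_mul (d2 x hx k l))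
            ((dMs k l).fun_mul (d3 x hx j k l)) i,
          SOAR.pderiv'_mul ((dPM k l j).const_mul ε⁻¹) (d2 x hx k l) i,
          SOAR.pderiv'_mul (dMs k l) (d3 x hx j k l) i,
          SOAR.pderiv'_const_mul (dPM k l j) ε⁻¹ i,
          SOAR.pderiv'_comp_smul ((hM1d k l j) _) i,
          SOAR.pderiv'_comp_smul ((hMd k l) _) i]
        ring
    simp only [hHf]
    rw [SOAR.pderiv'_add ((d1 x hx j).fun_add ((qS1 j).const_mul ε)) ((qS2 j).const_mul (ε ^ 2)) i,
      SOAR.pderiv'_add (d1 x hx j) ((qS1 j).const_mul ε) i,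
      SOAR.pderiv'_const_mul (qS1 j) ε i, SOAR.pderiv'_const_mul (qS2 j) (ε ^ 2) i,
      SOAR.pderiv'_sum _ (fun m _ => q1 j m) i, SOAR.pderiv'_sum _ (fun k _ => qS2i j k) i,
      e1, e2]
  -- the outer derivative
  have houter : ∀ i, pderiv' n i (fun x' => ∑ j, a i j (ε⁻¹ • x') *
      pderiv' n j (fun x'' => u₀ x''
                  + ε * ∑ m, N m (ε⁻¹ • x'') * pderiv' n m u₀ x''
                  + ε ^ 2 * ∑ k, ∑ l,
                      M k l (ε⁻¹ • x'') * pderiv' n k (pderiv' n l u₀) x'') x') x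
      = ∑ j, (ε⁻¹ * pderiv' n i (a i j) (ε⁻¹ • x) * Hf j x
          + a i j (ε⁻¹ • x) * pderiv' n i (Hf j) x) := by
    intro i
    have hev : (fun x' => ∑ j, a i j (ε⁻¹ • x') * pderiv' n j (fun x'' => u₀ x''
                  + ε * ∑ m, N m (ε⁻¹ • x'') * pderiv' n m u₀ x''
                  + ε ^ 2 * ∑ k, ∑ l,
                      M k l (ε⁻¹ • x'') * pderiv' n k (pderiv' n l u₀) x'') x')
        =ᶠ[nhds x] fun x' => ∑ j, a i j (ε⁻¹ • x') * Hf j x' := by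
      filter_upwards [hΩ.mem_nhds hx] with x' hx'
      exact Finset.sum_congr rfl fun j _ => by rw [hinner x' hx' j]
    have dAj : ∀ j, DifferentiableAt ℝ (fun z => a i j (ε⁻¹ • z)) x := fun j =>
      SOAR.differentiableAt_comp_smul ((had i j) _)
    rw [SOAR.pderiv'_congr hev i,
      SOAR.pderiv'_sum _ (fun j _ => (dAj j).fun_mul (dHfx j)) i]
    refine Finset.sum_congr rfl fun j _ => ?_
    rw [SOAR.pderiv'_mul (dAj j) (dHfx j) i, SOAR.pderiv'_comp_smul ((had i j) _) i]
  -- the cell problems, expanded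
  have hC1 : ∀ m, (∑ i, ∑ j, (pderiv' n i (a i j) (ε⁻¹ • x) * pderiv' n j (N m) (ε⁻¹ • x)
        + a i j (ε⁻¹ • x) * pderiv' n i (pderiv' n j (N m)) (ε⁻¹ • x)))
      = -∑ i, pderiv' n i (a i m) (ε⁻¹ • x) := by
    intro m
    rw [← hNcell m (ε⁻¹ • x)]
    refine Finset.sum_congr rfl fun i _ => ?_
    rw [SOAR.pderiv'_sum _
      (fun j _ => ((had i j).differentiableAt).fun_mul ((hN1d m j).differentiableAt)) i]
    exact Finset.sum_congr rfl fun j _ =>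
      (SOAR.pderiv'_mul ((had i j).differentiableAt) ((hN1d m j).differentiableAt) i).symm
  have hC2 : ∀ k l, -(∑ i, ∑ j, (pderiv' n i (a i j) (ε⁻¹ • x) * pderiv' n j (M k l) (ε⁻¹ • x)
        + a i j (ε⁻¹ • x) * pderiv' n i (pderiv' n j (M k l)) (ε⁻¹ • x)))
      = a k l (ε⁻¹ • x) + (∑ m, a k m (ε⁻¹ • x) * pderiv' n m (N l) (ε⁻¹ • x)) - a0 k l
        + ∑ i, (pderiv' n i (a i k) (ε⁻¹ • x) * N l (ε⁻¹ • x)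
            + a i k (ε⁻¹ • x) * pderiv' n i (N l) (ε⁻¹ • x)) := by
    intro k l
    have h := hMcell k l (ε⁻¹ • x)
    rw [show (∑ i, pderiv' n i (fun z => ∑ j, a i j z * pderiv' n j (M k l) z) (ε⁻¹ • x))
        = ∑ i, ∑ j, (pderiv' n i (a i j) (ε⁻¹ • x) * pderiv' n j (M k l) (ε⁻¹ • x)
            + a i j (ε⁻¹ • x) * pderiv' n i (pderiv' n j (M k l)) (ε⁻¹ • x)) from
      Finset.sum_congr rfl fun i _ => by
        rw [SOAR.pderiv'_sum _
          (fun j _ => ((had i j).differentiableAt).fun_mul ((hM1d k l j).differentiableAt)) i]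
        exact Finset.sum_congr rfl fun j _ =>
          SOAR.pderiv'_mul ((had i j).differentiableAt) ((hM1d k l j).differentiableAt) i] at h
    rw [show (∑ i, pderiv' n i (fun z => a i k z * N l z) (ε⁻¹ • x))
        = ∑ i, (pderiv' n i (a i k) (ε⁻¹ • x) * N l (ε⁻¹ • x)
            + a i k (ε⁻¹ • x) * pderiv' n i (N l) (ε⁻¹ • x)) from
      Finset.sum_congr rfl fun i _ =>
        SOAR.pderiv'_mul ((had i k).differentiableAt) ((hNd l).differentiableAt) i] at h
    exact h
  -- the algebraic identity
  have halg : (-(∑ i, ∑ j, (ε⁻¹ * pderiv' n i (a i j) (ε⁻¹ • x) * Hf j x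
          + a i j (ε⁻¹ • x) * pderiv' n i (Hf j) x)))
        - (-(∑ i, ∑ j, a0 i j * pderiv' n i (pderiv' n j u₀) x))
      = -(ε * (∑ i, ∑ j, (pderiv' n i (a i j) (ε⁻¹ • x)
              * (∑ k, ∑ l, M k l (ε⁻¹ • x) * pderiv' n j (pderiv' n k (pderiv' n l u₀)) x)
            + a i j (ε⁻¹ • x) * ((∑ m, N m (ε⁻¹ • x) * pderiv' n i (pderiv' n j (pderiv' n m u₀)) x)
              + (∑ k, ∑ l, pderiv' n j (M k l) (ε⁻¹ • x) * pderiv' n i (pderiv' n k (pderiv' n l u₀)) x)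
              + (∑ k, ∑ l, pderiv' n i (M k l) (ε⁻¹ • x) * pderiv' n j (pderiv' n k (pderiv' n l u₀)) x))))
        + ε ^ 2 * (∑ i, ∑ j, a i j (ε⁻¹ • x)
            * (∑ k, ∑ l, M k l (ε⁻¹ • x) * pderiv' n i (pderiv' n j (pderiv' n k (pderiv' n l u₀))) x))) :=
    SOAR.key_algebra ε ε⁻¹ hmulinv
      (fun i j => a i j (ε⁻¹ • x)) (fun i j => pderiv' n i (a i j) (ε⁻¹ • x)) a0
      (fun m => N m (ε⁻¹ • x)) (fun m j => pderiv' n j (N m) (ε⁻¹ • x))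
      (fun m j i => pderiv' n i (pderiv' n j (N m)) (ε⁻¹ • x))
      (fun k l => M k l (ε⁻¹ • x)) (fun k l j => pderiv' n j (M k l) (ε⁻¹ • x))
      (fun k l j i => pderiv' n i (pderiv' n j (M k l)) (ε⁻¹ • x))
      (fun m => pderiv' n m u₀ x) (fun k l => pderiv' n k (pderiv' n l u₀) x)
      (fun j k l => pderiv' n j (pderiv' n k (pderiv' n l u₀)) x)
      (fun i j k l => pderiv' n i (pderiv' n j (pderiv' n k (pderiv' n l u₀))) x)
      (fun j => Hf j x) (fun i j => pderiv' n i (Hf j) x)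
      (fun j => by rw [hHf]) hdH hC1 hC2
  -- rewrite the goal
  rw [show (∑ i, pderiv' n i (fun x' => ∑ j, a i j (ε⁻¹ • x') *
        pderiv' n j (fun x'' => u₀ x''
                  + ε * ∑ m, N m (ε⁻¹ • x'') * pderiv' n m u₀ x''
                  + ε ^ 2 * ∑ k, ∑ l,
                      M k l (ε⁻¹ • x'') * pderiv' n k (pderiv' n l u₀) x'') x') x)
      = ∑ i, ∑ j, (ε⁻¹ * pderiv' n i (a i j) (ε⁻¹ • x) * Hf j x
          + a i j (ε⁻¹ • x) * pderiv' n i (Hf j) x) from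
    Finset.sum_congr rfl fun i _ => houter i, ← hu₀f x hx, halg]
  -- atom bounds
  have bA : ∀ i j, |a i j (ε⁻¹ • x)| ≤ Ka' := fun i j => le_trans (habd i j _) (le_max_left _ _)
  have bA' : ∀ i j, |pderiv' n i (a i j) (ε⁻¹ • x)| ≤ Ka' := fun i j =>
    le_trans (SOAR.abs_pderiv'_le (habd' i j _) i) (le_max_left _ _)
  have bN : ∀ m, |N m (ε⁻¹ • x)| ≤ Kn' := fun m => le_trans (hNbd m _) (le_max_left _ _)
  have bM : ∀ k l, |M k l (ε⁻¹ • x)| ≤ Km' := fun k l => le_trans (hMbd k l _) (le_max_left _ _)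
  have bM' : ∀ k l j, |pderiv' n j (M k l) (ε⁻¹ • x)| ≤ Km' := fun k l j =>
    le_trans (SOAR.abs_pderiv'_le (hMbd' k l _) j) (le_max_left _ _)
  have bU3 : ∀ i j k, |pderiv' n i (pderiv' n j (pderiv' n k u₀)) x| ≤ Ku' := fun i j k =>
    le_trans (hu₀bd3 x hx i j k) (le_max_left _ _)
  have bU4 : ∀ i j k l, |pderiv' n i (pderiv' n j (pderiv' n k (pderiv' n l u₀))) x| ≤ Ku' :=
    fun i j k l => le_trans (hu₀bd4 x hx i j k l) (le_max_left _ _)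
  -- bounds of the two sums
  have hTb : |∑ i, ∑ j, (pderiv' n i (a i j) (ε⁻¹ • x)
        * (∑ k, ∑ l, M k l (ε⁻¹ • x) * pderiv' n j (pderiv' n k (pderiv' n l u₀)) x)
      + a i j (ε⁻¹ • x) * ((∑ m, N m (ε⁻¹ • x) * pderiv' n i (pderiv' n j (pderiv' n m u₀)) x)
        + (∑ k, ∑ l, pderiv' n j (M k l) (ε⁻¹ • x) * pderiv' n i (pderiv' n k (pderiv' n l u₀)) x)
        + (∑ k, ∑ l, pderiv' n i (M k l) (ε⁻¹ • x) * pderiv' n j (pderiv' n k (pderiv' n l u₀)) x)))|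
      ≤ (n:ℝ) * ((n:ℝ) * cz) := by
    refine SOAR.abs_sum_le_card _ _ fun i => SOAR.abs_sum_le_card _ _ fun j => ?_
    rw [hcz]
    have hb1 : |∑ k, ∑ l, M k l (ε⁻¹ • x) * pderiv' n j (pderiv' n k (pderiv' n l u₀)) x|
        ≤ (n:ℝ) * ((n:ℝ) * (Km' * Ku')) :=
      SOAR.abs_sum_le_card _ _ fun k => SOAR.abs_sum_le_card _ _ fun l =>
        SOAR.abs_mul_le (bM k l) (bU3 j k l) hKm0
    have hb2 : |∑ m, N m (ε⁻¹ • x) * pderiv' n i (pderiv' n j (pderiv' n m u₀)) x|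
        ≤ (n:ℝ) * (Kn' * Ku') :=
      SOAR.abs_sum_le_card _ _ fun m => SOAR.abs_mul_le (bN m) (bU3 i j m) hKn0
    have hb3 : |∑ k, ∑ l, pderiv' n j (M k l) (ε⁻¹ • x) * pderiv' n i (pderiv' n k (pderiv' n l u₀)) x|
        ≤ (n:ℝ) * ((n:ℝ) * (Km' * Ku')) :=
      SOAR.abs_sum_le_card _ _ fun k => SOAR.abs_sum_le_card _ _ fun l =>
        SOAR.abs_mul_le (bM' k l j) (bU3 i k l) hKm0
    have hb4 : |∑ k, ∑ l, pderiv' n i (M k l) (ε⁻¹ • x) * pderiv' n j (pderiv' n k (pderiv' n l u₀)) x|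
        ≤ (n:ℝ) * ((n:ℝ) * (Km' * Ku')) :=
      SOAR.abs_sum_le_card _ _ fun k => SOAR.abs_sum_le_card _ _ fun l =>
        SOAR.abs_mul_le (bM' k l i) (bU3 j k l) hKm0
    calc |_| ≤ |pderiv' n i (a i j) (ε⁻¹ • x)
          * (∑ k, ∑ l, M k l (ε⁻¹ • x) * pderiv' n j (pderiv' n k (pderiv' n l u₀)) x)|
        + |a i j (ε⁻¹ • x) * ((∑ m, N m (ε⁻¹ • x) * pderiv' n i (pderiv' n j (pderiv' n m u₀)) x)
          + (∑ k, ∑ l, pderiv' n j (M k l) (ε⁻¹ • x) * pderiv' n i (pderiv' n k (pderiv' n l u₀)) x)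
          + (∑ k, ∑ l, pderiv' n i (M k l) (ε⁻¹ • x) * pderiv' n j (pderiv' n k (pderiv' n l u₀)) x))| :=
        abs_add_le _ _
      _ ≤ Ka' * ((n:ℝ) * ((n:ℝ) * (Km' * Ku')))
          + Ka' * ((n:ℝ) * (Kn' * Ku') + (n:ℝ) * ((n:ℝ) * (Km' * Ku'))
            + (n:ℝ) * ((n:ℝ) * (Km' * Ku'))) :=
        add_le_add (SOAR.abs_mul_le (bA' i j) hb1 hKa0)
          (SOAR.abs_mul_le (bA i j)
            (le_trans (abs_add_le _ _)
              (add_le_add (le_trans (abs_add_le _ _) (add_le_add hb2 hb3)) hb4)) hKa0)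
  have hSb : |∑ i, ∑ j, a i j (ε⁻¹ • x)
        * (∑ k, ∑ l, M k l (ε⁻¹ • x) * pderiv' n i (pderiv' n j (pderiv' n k (pderiv' n l u₀))) x)|
      ≤ (n:ℝ) * ((n:ℝ) * cw) := by
    refine SOAR.abs_sum_le_card _ _ fun i => SOAR.abs_sum_le_card _ _ fun j => ?_
    rw [hcw]
    exact SOAR.abs_mul_le (bA i j)
      (SOAR.abs_sum_le_card _ _ fun k => SOAR.abs_sum_le_card _ _ fun l =>
        SOAR.abs_mul_le (bM k l) (bU4 i j k l) hKm0) hKa0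
  -- final estimate
  calc |-(ε * _ + ε ^ 2 * _)| = |ε * _ + ε ^ 2 * _| := abs_neg _
    _ ≤ |ε * _| + |ε ^ 2 * _| := abs_add_le _ _
    _ = ε * |_| + ε ^ 2 * |_| := by
        rw [abs_mul, abs_mul, abs_of_pos hε, abs_of_pos (pow_pos hε 2)]
    _ ≤ ε * ((n:ℝ) * ((n:ℝ) * cz)) + ε ^ 2 * ((n:ℝ) * ((n:ℝ) * cw)) :=
        add_le_add (mul_le_mul_of_nonneg_left hTb hε.le)
          (mul_le_mul_of_nonneg_left hSb (pow_nonneg hε.le 2))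
    _ ≤ ε * ((n:ℝ) * ((n:ℝ) * cz)) + ε * ((n:ℝ) * ((n:ℝ) * cw)) := by
        have h2 : ε ^ 2 ≤ ε := by nlinarith
        exact add_le_add_right (mul_le_mul_of_nonneg_right h2 hcw2) _
    _ = ((n:ℝ) * ((n:ℝ) * cz) + (n:ℝ) * ((n:ℝ) * cw)) * ε := by ring
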